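/- Let p : ℂ² → ℝ³ be defined by p(z₁, z₂) = ((|z₁|² − |z₂|²)/2, Re(z₁z₂), Im(z₁z₂)). Then for all (z₁, z₂), (z₁', z₂') ∈ ℂ², one has p(z₁, z₂) = p(z₁', z₂') if and only if there exists λ ∈ ℂ with |λ| = 1 such that z₁' = λz₁ and z₂' = (conj λ)·z₂. -/

import Mathlib

/-- The Gibbons–Hawking projection `p : ℂ² → ℝ³`,
`p(z₁,z₂) = ((|z₁|²−|z₂|²)/2, Re(z₁z₂), Im(z₁z₂))`. -/
noncomputable def ghProj (z : ℂ × ℂ) : EuclideanSpace ℝ (Fin 3) :=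
  (WithLp.equiv 2 (Fin 3 → ℝ)).symm
    ![(‖z.1‖ ^ 2 - ‖z.2‖ ^ 2) / 2, (z.1 * z.2).re, (z.1 * z.2).im]

/-- The fibres of the Gibbons–Hawking projection are exactly the orbits of the
circle action `(z₁, z₂) ↦ (λz₁, λ̄z₂)`, `|λ| = 1`. -/
theorem ghProj_eq_iff (z₁ z₂ z₁' z₂' : ℂ) :
    ghProj (z₁, z₂) = ghProj (z₁', z₂') ↔
      ∃ lam : ℂ, ‖lam‖ = 1 ∧ z₁' = lam * z₁ ∧
        z₂' = (starRingEnd ℂ) lam * z₂ := by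
  constructor
  · intro h
    have h' : (![(‖z₁‖ ^ 2 - ‖z₂‖ ^ 2) / 2, (z₁ * z₂).re, (z₁ * z₂).im] : Fin 3 → ℝ)
        = ![(‖z₁'‖ ^ 2 - ‖z₂'‖ ^ 2) / 2, (z₁' * z₂').re, (z₁' * z₂').im] :=
      (WithLp.equiv 2 (Fin 3 → ℝ)).symm.injective h
    have h0 := congrFun h' 0
    have h1 := congrFun h' 1
    have h2 := congrFun h' 2
    simp only [Matrix.cons_val_zero, Matrix.cons_val_one, Matrix.head_cons,
      Matrix.cons_val_two, Matrix.tail_cons] at h0 h1 h2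
    have hprod : z₁ * z₂ = z₁' * z₂' := Complex.ext h1 h2
    have habs : ‖z₁‖ * ‖z₂‖ = ‖z₁'‖ * ‖z₂'‖ := by
      rw [← norm_mul, ← norm_mul, hprod]
    set a := ‖z₁‖; set b := ‖z₂‖
    set a' := ‖z₁'‖; set b' := ‖z₂'‖
    have e1 : a^2 - b^2 = a'^2 - b'^2 := by linarith
    have e2 : (a^2-b^2)^2 = (a'^2-b'^2)^2 := by rw [e1]
    have e3 : (a*b)^2 = (a'*b')^2 := by rw [habs]
    have hs : (a^2+b^2)^2 = (a'^2+b'^2)^2 := by nlinarith [e2, e3]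
    have hna : 0 ≤ a := norm_nonneg z₁
    have hnb : 0 ≤ b := norm_nonneg z₂
    have hna' : 0 ≤ a' := norm_nonneg z₁'
    have hnb' : 0 ≤ b' := norm_nonneg z₂'
    have hsum : a^2+b^2 = a'^2+b'^2 := by
      have h := congrArg Real.sqrt hs
      rwa [Real.sqrt_sq (by positivity), Real.sqrt_sq (by positivity)] at h
    have ha1 : ‖z₁‖ = ‖z₁'‖ := by
      have hsq : a^2 = a'^2 := by linarith
      have h := congrArg Real.sqrt hsq
      rwa [Real.sqrt_sq hna, Real.sqrt_sq hna'] at h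
    have ha2 : ‖z₂‖ = ‖z₂'‖ := by
      have hsq : b^2 = b'^2 := by linarith
      have h := congrArg Real.sqrt hsq
      rwa [Real.sqrt_sq hnb, Real.sqrt_sq hnb'] at h
    by_cases hz1 : z₁ = 0
    · have hz1' : z₁' = 0 := by
        rw [← norm_eq_zero, ← ha1, norm_eq_zero]; exact hz1
      by_cases hz2 : z₂ = 0
      · refine ⟨1, by simp, by simp [hz1, hz1'], ?_⟩
        have : z₂' = 0 := by
          rw [← norm_eq_zero, ← ha2, norm_eq_zero]; exact hz2
        simp [hz2, this]
      · refine ⟨(starRingEnd ℂ) (z₂' / z₂), ?_, by simp [hz1, hz1'], ?_⟩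
        · simp [map_div₀, ← ha2, norm_ne_zero_iff.mpr hz2, div_self]
        · rw [Complex.conj_conj, div_mul_cancel₀ _ hz2]
    · refine ⟨z₁' / z₁, ?_, by rw [div_mul_cancel₀ _ hz1], ?_⟩
      · simp [map_div₀, ← ha1, norm_ne_zero_iff.mpr hz1, div_self]
      · by_cases hz2 : z₂ = 0
        · have : z₂' = 0 := by
            rw [← norm_eq_zero, ← ha2, norm_eq_zero]; exact hz2
          simp [hz2, this]
        · have hz1' : z₁' ≠ 0 := by
            rw [← norm_ne_zero_iff, ← ha1, norm_ne_zero_iff]; exact hz1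
          have hlamabs : ‖z₁' / z₁‖ = 1 := by
            simp [map_div₀, ← ha1, norm_ne_zero_iff.mpr hz1, div_self]
          have hinv : (starRingEnd ℂ) (z₁' / z₁) = (z₁' / z₁)⁻¹ := by
            rw [Complex.inv_def, Complex.normSq_eq_norm_sq, hlamabs]
            simp
          rw [hinv]
          field_simp
          rw [mul_comm z₂' z₁']
          exact hprod.symm
  · rintro ⟨lam, hlam, rfl, rfl⟩
    have h1 : ‖lam * z₁‖ = ‖z₁‖ := by simp [hlam]
    have h2 : ‖(starRingEnd ℂ) lam * z₂‖ = ‖z₂‖ := by simp [hlam]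
    have h3 : lam * z₁ * ((starRingEnd ℂ) lam * z₂) = z₁ * z₂ := by
      have hone : (starRingEnd ℂ) lam * lam = 1 := by
        rw [mul_comm, Complex.mul_conj, Complex.normSq_eq_norm_sq, hlam]; norm_num
      calc lam * z₁ * ((starRingEnd ℂ) lam * z₂)
          = ((starRingEnd ℂ) lam * lam) * (z₁ * z₂) := by ring
        _ = z₁ * z₂ := by rw [hone, one_mul]
    unfold ghProj
    congr 1
    rw [h1, h2, h3]
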